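/- Let β ∈ (0,1) be a real number, n ≥ 1 and N natural numbers, x : Fin n → Fin N → Bool the experts' predictions, and c : Fin N → Bool the correct labels. For an expert i and a time t ≤ N, let mist i t denote the number of trials j < t with x i j ≠ c j, let w i t = β^(mist i t), let W t = ∑_{i} w i t, and let F t = (∑_{i : x i t ≠ c t} w i t) / W t. Then for every expert k, the expected number of mistakes M = ∑_{t < N} F t satisfies M ≤ (mist k N * ln(1/β) + ln n) / (1 - β). -/

import Mathlib

/-- Number of mistakes expert `i` made during the first `t` trials. -/
def mist {n N : ℕ} (x : Fin n → Fin N → Bool) (c : Fin N → Bool)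
    (i : Fin n) (t : ℕ) : ℕ :=
  (Finset.univ.filter (fun j : Fin N => (j : ℕ) < t ∧ x i j ≠ c j)).card

/-- Weight of expert `i` just before trial `t`. -/
noncomputable def w (β : ℝ) {n N : ℕ} (x : Fin n → Fin N → Bool) (c : Fin N → Bool)
    (i : Fin n) (t : ℕ) : ℝ :=
  β ^ (mist x c i t)

/-- Total weight just before trial `t`. -/
noncomputable def W (β : ℝ) {n N : ℕ} (x : Fin n → Fin N → Bool) (c : Fin N → Bool)
    (t : ℕ) : ℝ :=
  ∑ i : Fin n, w β x c i t

/-- Fraction of the total weight placed on the wrong answer at trial `t`. -/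
noncomputable def F (β : ℝ) {n N : ℕ} (x : Fin n → Fin N → Bool) (c : Fin N → Bool)
    (t : Fin N) : ℝ :=
  (∑ i ∈ Finset.univ.filter (fun i : Fin n => x i t ≠ c t), w β x c i (t : ℕ)) /
    W β x c (t : ℕ)

lemma mist_succ {n N : ℕ} (x : Fin n → Fin N → Bool) (c : Fin N → Bool)
    (i : Fin n) (t : ℕ) (ht : t < N) :
    mist x c i (t + 1) =
      mist x c i t + (if x i ⟨t, ht⟩ ≠ c ⟨t, ht⟩ then 1 else 0) := by
  classical
  unfold mist
  have hset : (Finset.univ.filter (fun j : Fin N => (j : ℕ) < t + 1 ∧ x i j ≠ c j))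
      = (Finset.univ.filter (fun j : Fin N => (j : ℕ) < t ∧ x i j ≠ c j)) ∪
        (Finset.univ.filter (fun j : Fin N => j = ⟨t, ht⟩ ∧ x i j ≠ c j)) := by
    ext j
    simp only [Finset.mem_filter, Finset.mem_union, Finset.mem_univ, true_and]
    constructor
    · rintro ⟨hlt, hp⟩
      rcases Nat.lt_succ_iff_lt_or_eq.mp hlt with h | h
      · exact Or.inl ⟨h, hp⟩
      · exact Or.inr ⟨Fin.ext h, hp⟩
    · rintro (⟨hlt, hp⟩ | ⟨rfl, hp⟩)
      · exact ⟨Nat.lt_succ_of_lt hlt, hp⟩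
      · exact ⟨Nat.lt_succ_self t, hp⟩
  rw [hset, Finset.card_union_of_disjoint]
  · have h2 : Finset.univ.filter (fun j : Fin N => j = ⟨t, ht⟩ ∧ x i j ≠ c j)
        = if x i ⟨t, ht⟩ ≠ c ⟨t, ht⟩ then {(⟨t, ht⟩ : Fin N)} else ∅ := by
      split_ifs with hp
      · ext j
        simp only [Finset.mem_filter, Finset.mem_univ, true_and, Finset.mem_singleton]
        constructor
        · exact fun h => h.1
        · rintro rfl; exact ⟨rfl, hp⟩
      · ext j
        simp only [Finset.mem_filter, Finset.mem_univ, true_and, Finset.notMem_empty,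
          iff_false, not_and]
        rintro rfl; exact fun hp' => hp hp'
    rw [h2]
    split_ifs <;> simp
  · rw [Finset.disjoint_left]
    rintro j hj hj'
    simp only [Finset.mem_filter, Finset.mem_univ, true_and] at hj hj'
    rcases hj' with ⟨rfl, -⟩
    exact lt_irrefl t hj.1

lemma mist_stable {n N : ℕ} (x : Fin n → Fin N → Bool) (c : Fin N → Bool)
    (i : Fin n) (m : ℕ) (hm : N ≤ m) :
    mist x c i (m + 1) = mist x c i m := by
  unfold mist
  congr 1
  apply Finset.filter_congr
  intro j _
  have h1 : (j : ℕ) < m := lt_of_lt_of_le j.isLt hm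
  simp [h1, Nat.lt_succ_of_lt h1]

theorem rwm_mistake_bound
    (β : ℝ) (hβ0 : 0 < β) (hβ1 : β < 1)
    (n N : ℕ) (hn : 1 ≤ n)
    (x : Fin n → Fin N → Bool) (c : Fin N → Bool)
    (k : Fin n) :
    ∑ t : Fin N, F β x c t ≤
      ((mist x c k N : ℝ) * Real.log (1 / β) + Real.log n) / (1 - β) := by
  classical
  have hβ1' : 0 < 1 - β := by linarith
  have hwpos : ∀ (i : Fin n) (m : ℕ), 0 < w β x c i m := fun i m => pow_pos hβ0 _
  have hne : (Finset.univ : Finset (Fin n)).Nonempty := by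
    rw [Finset.univ_nonempty_iff]
    exact Fin.pos_iff_nonempty.mp hn
  have hWpos : ∀ m : ℕ, 0 < W β x c m := fun m =>
    Finset.sum_pos (fun i _ => hwpos i m) hne
  -- bounds on F
  have hSnn : ∀ t : Fin N,
      0 ≤ ∑ i ∈ Finset.univ.filter (fun i : Fin n => x i t ≠ c t), w β x c i (t : ℕ) :=
    fun t => Finset.sum_nonneg fun i _ => (hwpos i t).le
  have hSle : ∀ t : Fin N,
      (∑ i ∈ Finset.univ.filter (fun i : Fin n => x i t ≠ c t), w β x c i (t : ℕ))
        ≤ W β x c (t : ℕ) := fun t =>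
    Finset.sum_le_sum_of_subset_of_nonneg (Finset.filter_subset _ _)
      (fun i _ _ => (hwpos i t).le)
  have hF0 : ∀ t : Fin N, 0 ≤ F β x c t := fun t =>
    div_nonneg (hSnn t) (hWpos t).le
  have hF1 : ∀ t : Fin N, F β x c t ≤ 1 := fun t =>
    (div_le_one (hWpos t)).mpr (hSle t)
  -- recurrence
  have hstep : ∀ t : Fin N,
      W β x c ((t : ℕ) + 1) = W β x c t * (1 - (1 - β) * F β x c t) := by
    intro t
    have hL : W β x c ((t : ℕ) + 1)
        = ∑ i : Fin n, w β x c i t * (if x i t ≠ c t then β else 1) := by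
      unfold W
      apply Finset.sum_congr rfl
      intro i _
      unfold w
      rw [mist_succ x c i t t.isLt]
      simp only [Fin.eta]
      split_ifs <;> ring
    rw [hL]
    rw [← Finset.sum_filter_add_sum_filter_not Finset.univ (fun i : Fin n => x i t ≠ c t)]
    have hW : W β x c (t : ℕ)
        = (∑ i ∈ Finset.univ.filter (fun i : Fin n => x i t ≠ c t), w β x c i (t : ℕ))
          + ∑ i ∈ Finset.univ.filter (fun i : Fin n => ¬ x i t ≠ c t), w β x c i (t : ℕ) :=
      (Finset.sum_filter_add_sum_filter_not Finset.univ _ _).symm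
    have hFdef : F β x c t * W β x c (t : ℕ)
        = ∑ i ∈ Finset.univ.filter (fun i : Fin n => x i t ≠ c t), w β x c i (t : ℕ) := by
      unfold F
      exact div_mul_cancel₀ _ (hWpos (t : ℕ)).ne'
    have e1 : ∑ i ∈ Finset.univ.filter (fun i : Fin n => x i t ≠ c t),
        w β x c i (t : ℕ) * (if x i t ≠ c t then β else 1)
        = β * ∑ i ∈ Finset.univ.filter (fun i : Fin n => x i t ≠ c t), w β x c i (t : ℕ) := by
      rw [Finset.mul_sum]
      apply Finset.sum_congr rfl
      intro i hi
      simp only [Finset.mem_filter] at hi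
      rw [if_pos hi.2]; ring
    have e2 : ∑ i ∈ Finset.univ.filter (fun i : Fin n => ¬ x i t ≠ c t),
        w β x c i (t : ℕ) * (if x i t ≠ c t then β else 1)
        = ∑ i ∈ Finset.univ.filter (fun i : Fin n => ¬ x i t ≠ c t), w β x c i (t : ℕ) := by
      apply Finset.sum_congr rfl
      intro i hi
      simp only [Finset.mem_filter] at hi
      rw [if_neg hi.2]; ring
    rw [e1, e2]
    nlinarith [hFdef, hW]
  -- extended F
  set Fm : ℕ → ℝ := fun m => if h : m < N then F β x c ⟨m, h⟩ else 0 with hFm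
  -- key log inequality by induction
  have key : ∀ m : ℕ, Real.log (W β x c m)
      ≤ Real.log n - (1 - β) * ∑ j ∈ Finset.range m, Fm j := by
    intro m
    induction m with
    | zero =>
      have hW0 : W β x c 0 = (n : ℝ) := by
        unfold W w mist
        simp
      simp [hW0]
    | succ m ih =>
      rw [Finset.sum_range_succ]
      by_cases h : m < N
      · have hFmm : Fm m = F β x c ⟨m, h⟩ := dif_pos h
        have hr : (0:ℝ) < 1 - (1 - β) * F β x c ⟨m, h⟩ := by
          nlinarith [hF1 ⟨m, h⟩, hF0 ⟨m, h⟩]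
        have := hstep ⟨m, h⟩
        simp only at this
        rw [this, Real.log_mul (hWpos m).ne' hr.ne']
        have hlog : Real.log (1 - (1 - β) * F β x c ⟨m, h⟩)
            ≤ -((1 - β) * F β x c ⟨m, h⟩) := by
          have := Real.log_le_sub_one_of_pos hr
          linarith
        rw [hFmm]
        linarith
      · have hN : N ≤ m := le_of_not_gt h
        have hWeq : W β x c (m + 1) = W β x c m := by
          unfold W
          apply Finset.sum_congr rfl
          intro i _
          unfold w
          rw [mist_stable x c i m hN]
        have hFmm : Fm m = 0 := dif_neg h
        rw [hWeq, hFmm]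
        linarith
  -- expert k lower bound
  have hk : (β : ℝ) ^ (mist x c k N) ≤ W β x c N := by
    have := Finset.single_le_sum (f := fun i => w β x c i N)
      (fun i _ => (hwpos i N).le) (Finset.mem_univ k)
    simpa [w, W] using this
  have hlogk : (mist x c k N : ℝ) * Real.log β ≤ Real.log (W β x c N) := by
    have := Real.log_le_log (pow_pos hβ0 _) hk
    rwa [Real.log_pow] at this
  have hsum : ∑ j ∈ Finset.range N, Fm j = ∑ t : Fin N, F β x c t := by
    rw [← Fin.sum_univ_eq_sum_range]
    apply Finset.sum_congr rfl
    intro t _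
    simp [hFm, t.isLt]
  have hmain : (mist x c k N : ℝ) * Real.log β
      ≤ Real.log n - (1 - β) * ∑ t : Fin N, F β x c t := by
    calc (mist x c k N : ℝ) * Real.log β ≤ Real.log (W β x c N) := hlogk
      _ ≤ Real.log n - (1 - β) * ∑ j ∈ Finset.range N, Fm j := key N
      _ = _ := by rw [hsum]
  rw [le_div_iff₀ hβ1']
  have hinv : Real.log (1 / β) = -Real.log β := by
    rw [one_div, Real.log_inv]
  rw [hinv]
  nlinarith [hmain]
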